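/- A fully indecomposable (0,1)-matrix X of order n contains at most n(n−2) zero entries (and this bound is attained, e.g., by the reduced adjacency matrix of the cycle C_{2n} for n ≥ 2). -/

import Mathlib

open SimpleGraph

/-- A stable (independent) set of vertices: pairwise nonadjacent. -/
def IsStableSet {V : Type*} (G : SimpleGraph V) (S : Set V) : Prop :=
  S.Pairwise fun u v => ¬ G.Adj u v

/-- The stability number `α(G)`: maximum cardinality of a stable set. -/
noncomputable def stabNum {V : Type*} (G : SimpleGraph V) : ℕ :=
  sSup {k | ∃ S : Set V, IsStableSet G S ∧ S.ncard = k}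

/-- A maximum stable set. -/
def IsMaxStableSet {V : Type*} (G : SimpleGraph V) (S : Set V) : Prop :=
  IsStableSet G S ∧ S.ncard = stabNum G

/-- `G` is α⁺-stable: adding any edge between nonadjacent vertices keeps α. -/
def AlphaPlusStable {V : Type*} (G : SimpleGraph V) : Prop :=
  ∀ x y : V, x ≠ y → ¬ G.Adj x y →
    stabNum (G ⊔ SimpleGraph.fromEdgeSet {s(x, y)}) = stabNum G

/-- `G` is α⁻-stable: deleting any edge keeps α. -/
def AlphaMinusStable {V : Type*} (G : SimpleGraph V) : Prop :=
  ∀ e ∈ G.edgeSet, stabNum (G.deleteEdges {e}) = stabNum G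

/-- `G` is α-stable: both α⁺-stable and α⁻-stable. -/
def AlphaStable {V : Type*} (G : SimpleGraph V) : Prop :=
  AlphaPlusStable G ∧ AlphaMinusStable G

/-- `{A, B}` is a bipartition of `G`. -/
def IsBipartition {V : Type*} (G : SimpleGraph V) (A B : Set V) : Prop :=
  Disjoint A B ∧ A ∪ B = Set.univ ∧
    ∀ ⦃x y⦄, G.Adj x y → (x ∈ A ∧ y ∈ B) ∨ (x ∈ B ∧ y ∈ A)

/-- `G` is bistable bipartite w.r.t. bipartition `{A, B}`:
`A` and `B` are its only maximum stable sets. -/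
def BistableBipartite {V : Type*} (G : SimpleGraph V) (A B : Set V) : Prop :=
  IsBipartition G A B ∧ ∀ S : Set V, IsMaxStableSet G S ↔ S = A ∨ S = B

/-- `G` has a perfect matching. -/
def HasPerfectMatching {V : Type*} (G : SimpleGraph V) : Prop :=
  ∃ M : G.Subgraph, M.IsPerfectMatching

/-- `X` has a `k` by `n - k` zero submatrix for some `1 ≤ k ≤ n - 1`. -/
def HasZeroSubmatrix {m : Type*} [Fintype m] (X : Matrix m m ℕ) : Prop :=
  ∃ R C : Finset m, R.Nonempty ∧ C.Nonempty ∧ R.card + C.card = Fintype.card m ∧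
    ∀ i ∈ R, ∀ j ∈ C, X i j = 0

/-- A square matrix is partly decomposable. -/
def PartlyDecomposable {m : Type*} [Fintype m] (X : Matrix m m ℕ) : Prop :=
  (Fintype.card m = 1 ∧ ∀ i j, X i j = 0) ∨ HasZeroSubmatrix X

/-- A square matrix is fully indecomposable iff it is not partly decomposable. -/
def FullyIndecomposable {m : Type*} [Fintype m] (X : Matrix m m ℕ) : Prop :=
  ¬ PartlyDecomposable X

/-- A (0,1)-matrix. -/
def ZeroOne {m k : Type*} (X : Matrix m k ℕ) : Prop :=
  ∀ i j, X i j = 0 ∨ X i j = 1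

/-- The term rank: maximal number of nonzero entries, no two on a line. -/
noncomputable def termRank {m k : Type*} [Fintype m] [Fintype k] (X : Matrix m k ℕ) : ℕ :=
  sSup {r | ∃ (f : Fin r ↪ m) (g : Fin r ↪ k), ∀ i, X (f i) (g i) ≠ 0}

/-- The permanent of a square matrix with natural entries. -/
def perm {m : Type*} [Fintype m] [DecidableEq m] (X : Matrix m m ℕ) : ℕ :=
  ∑ σ : Equiv.Perm m, ∏ i, X (σ i) i

/-- The bipartite graph whose reduced adjacency matrix is the (0,1)-matrix `X`. -/
def matGraph {ι κ : Type*} (X : Matrix ι κ ℕ) : SimpleGraph (ι ⊕ κ) :=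
  SimpleGraph.fromRel fun u v => ∃ i j, u = Sum.inl i ∧ v = Sum.inr j ∧ X i j = 1

/-- The reduced adjacency matrix of the cycle `C_{2n}`. -/
def cycleMat (n : ℕ) : Matrix (Fin n) (Fin n) ℕ :=
  fun i j => if j.val = i.val ∨ j.val = (i.val + 1) % n then 1 else 0

-- row bound
lemma stmt10_row_zeros_le {n : ℕ} (X : Matrix (Fin n) (Fin n) ℕ) (hFI : FullyIndecomposable X)
    (i : Fin n) : (Finset.univ.filter fun j => X i j = 0).card ≤ n - 2 := by
  rcases Nat.lt_or_ge n 2 with hn | hn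
  · interval_cases n
    · exact absurd i.2 (by omega)
    · -- n = 1
      have h1 : ¬ (∀ a b : Fin 1, X a b = 0) := by
        intro h
        exact hFI (Or.inl ⟨by simp, h⟩)
      push_neg at h1
      obtain ⟨a, b, hab⟩ := h1
      have : i = a := Subsingleton.elim _ _
      subst this
      have : (Finset.univ.filter fun j => X i j = 0) = ∅ := by
        ext j
        simp only [Finset.mem_filter, Finset.mem_univ, true_and, Finset.notMem_empty, iff_false]
        have : j = b := Subsingleton.elim _ _
        subst this; exact hab
      rw [this]; simp
  · by_contra h
    push_neg at h
    have hle : n - 1 ≤ (Finset.univ.filter fun j => X i j = 0).card := by omega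
    obtain ⟨C, hCsub, hCcard⟩ := Finset.exists_subset_card_eq hle
    refine hFI (Or.inr ⟨{i}, C, Finset.singleton_nonempty i, ?_, ?_, ?_⟩)
    · exact Finset.card_pos.mp (by omega)
    · simp [hCcard]; omega
    · intro a ha j hj
      rw [Finset.mem_singleton] at ha
      subst ha
      have := hCsub hj
      simp only [Finset.mem_filter] at this
      exact this.2

lemma stmt10_total_zeros_le {n : ℕ} (X : Matrix (Fin n) (Fin n) ℕ) (hFI : FullyIndecomposable X) :
    (Finset.univ.filter fun p : Fin n × Fin n => X p.1 p.2 = 0).card ≤ n * (n - 2) := by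
  classical
  calc (Finset.univ.filter fun p : Fin n × Fin n => X p.1 p.2 = 0).card
      = ∑ p : Fin n × Fin n, if X p.1 p.2 = 0 then 1 else 0 := by
        rw [Finset.card_filter]
    _ = ∑ i : Fin n, ∑ j : Fin n, if X i j = 0 then 1 else 0 := by
        rw [Fintype.sum_prod_type]
    _ = ∑ i : Fin n, (Finset.univ.filter fun j => X i j = 0).card := by
        refine Finset.sum_congr rfl fun i _ => ?_
        rw [Finset.card_filter]
    _ ≤ ∑ _i : Fin n, (n - 2) := Finset.sum_le_sum fun i _ => stmt10_row_zeros_le X hFI i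
    _ = n * (n - 2) := by simp [Finset.sum_const, mul_comm]

section Cycle
variable {n : ℕ}

lemma stmt10_val_add_one (hn : 2 ≤ n) (i : Fin n) :
    haveI : NeZero n := ⟨by omega⟩; ((i + 1 : Fin n)).val = (i.val + 1) % n := by
  haveI : NeZero n := ⟨by omega⟩
  rw [Fin.val_add, Fin.val_one', Nat.mod_eq_of_lt (show 1 < n by omega)]

lemma stmt10_cycleMat_zero_iff (hn : 2 ≤ n) (i j : Fin n) :
    haveI : NeZero n := ⟨by omega⟩
    (cycleMat n i j = 0 ↔ j ≠ i ∧ j ≠ i + 1) := by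
  haveI : NeZero n := ⟨by omega⟩
  unfold cycleMat
  rw [← stmt10_val_add_one hn i]
  split_ifs with h
  · simp only [Nat.one_ne_zero, false_iff]
    rcases h with h | h
    · exact fun hc => hc.1 (Fin.ext h)
    · exact fun hc => hc.2 (Fin.ext h)
  · push_neg at h
    simp only [eq_self_iff_true, true_iff]
    exact ⟨fun hc => h.1 (by rw [hc]), fun hc => h.2 (by rw [hc])⟩

open Fin.NatCast in
lemma stmt10_cycle_fi (hn : 2 ≤ n) : FullyIndecomposable (cycleMat n) := by
  haveI : NeZero n := ⟨by omega⟩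
  rintro (⟨h1, _⟩ | ⟨R, C, hR, hC, hcard, hz⟩)
  · simp at h1; omega
  · rw [Fintype.card_fin] at hcard
    have hzero : ∀ i ∈ R, i ∉ C ∧ i + 1 ∉ C := by
      intro i hi
      constructor
      · intro hiC
        exact ((stmt10_cycleMat_zero_iff hn i i).mp (hz i hi i hiC)).1 rfl
      · intro hiC
        exact ((stmt10_cycleMat_zero_iff hn i (i+1)).mp (hz i hi (i+1) hiC)).2 rfl
    classical
    have hRsub : R ⊆ Cᶜ := fun i hi => Finset.mem_compl.mpr (hzero i hi).1
    have hIsub : R.image (· + 1) ⊆ Cᶜ := by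
      intro j hj
      obtain ⟨i, hi, rfl⟩ := Finset.mem_image.mp hj
      exact Finset.mem_compl.mpr (hzero i hi).2
    have hCcard : Cᶜ.card = R.card := by
      rw [Finset.card_compl, Fintype.card_fin]; omega
    have hReq : R = Cᶜ := Finset.eq_of_subset_of_card_le hRsub (by omega)
    have hIcard : (R.image (· + 1)).card = R.card :=
      Finset.card_image_of_injective _ (add_left_injective 1)
    have hIeq : R.image (· + 1) = Cᶜ := Finset.eq_of_subset_of_card_le hIsub (by omega)
    have hclosed : ∀ i ∈ R, i + 1 ∈ R := by
      intro i hi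
      rw [hReq, ← hIeq]
      exact Finset.mem_image.mpr ⟨i, hi, rfl⟩
    obtain ⟨i0, hi0⟩ := hR
    have hall : ∀ k : ℕ, i0 + (k : Fin n) ∈ R := by
      intro k
      induction k with
      | zero => simpa using hi0
      | succ k ih =>
        have : (((k + 1 : ℕ)) : Fin n) = (k : Fin n) + 1 := by push_cast; ring
        rw [this, ← add_assoc]
        exact hclosed _ ih
    have hRuniv : R = Finset.univ := by
      refine Finset.eq_univ_of_forall fun j => ?_
      have := hall (j - i0).val
      rwa [Fin.cast_val_eq_self, add_sub_cancel] at this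
    obtain ⟨c, hc⟩ := hC
    have : c ∈ Cᶜ := hReq ▸ hRuniv ▸ Finset.mem_univ c
    exact Finset.mem_compl.mp this hc

lemma stmt10_cycle_count (hn : 2 ≤ n) :
    (Finset.univ.filter fun p : Fin n × Fin n => cycleMat n p.1 p.2 = 0).card = n * (n - 2) := by
  haveI : NeZero n := ⟨by omega⟩
  classical
  have hrow : ∀ i : Fin n, (Finset.univ.filter fun j => cycleMat n i j = 0).card = n - 2 := by
    intro i
    have : (Finset.univ.filter fun j => cycleMat n i j = 0) = ({i, i + 1}ᶜ : Finset (Fin n)) := by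
      ext j
      simp only [Finset.mem_filter, Finset.mem_univ, true_and, Finset.mem_compl,
        Finset.mem_insert, Finset.mem_singleton]
      rw [stmt10_cycleMat_zero_iff hn i j]
      tauto
    rw [this, Finset.card_compl, Fintype.card_fin, Finset.card_insert_of_notMem,
      Finset.card_singleton]
    simp only [Finset.mem_singleton]
    intro h
    have : (i : Fin n) + 1 - i = 0 := by rw [← h, sub_self]
    simp at this
    have := stmt10_val_add_one hn (0 : Fin n)
    omega
  calc (Finset.univ.filter fun p : Fin n × Fin n => cycleMat n p.1 p.2 = 0).card
      = ∑ p : Fin n × Fin n, if cycleMat n p.1 p.2 = 0 then 1 else 0 := by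
        rw [Finset.card_filter]
    _ = ∑ i : Fin n, ∑ j : Fin n, if cycleMat n i j = 0 then 1 else 0 := by
        rw [Fintype.sum_prod_type]
    _ = ∑ i : Fin n, (Finset.univ.filter fun j => cycleMat n i j = 0).card := by
        refine Finset.sum_congr rfl fun i _ => ?_
        rw [Finset.card_filter]
    _ = n * (n - 2) := by simp [hrow, Finset.sum_const, mul_comm]

end Cycle

/-- A fully indecomposable (0,1)-matrix of order `n` contains at most
`n (n - 2)` zero entries, and the bound is attained by the reduced adjacency matrix of
the cycle `C_{2n}` for every `n ≥ 2`. -/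
theorem stmt_10 :
    (∀ (n : ℕ) (X : Matrix (Fin n) (Fin n) ℕ), ZeroOne X → FullyIndecomposable X →
      (Finset.univ.filter fun p : Fin n × Fin n => X p.1 p.2 = 0).card ≤ n * (n - 2)) ∧
    (∀ n : ℕ, 2 ≤ n → FullyIndecomposable (cycleMat n) ∧
      (Finset.univ.filter fun p : Fin n × Fin n => cycleMat n p.1 p.2 = 0).card
        = n * (n - 2)) := by
  exact ⟨fun n X _ hFI => stmt10_total_zeros_le X hFI,
    fun n hn => ⟨stmt10_cycle_fi hn, stmt10_cycle_count hn⟩⟩
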